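/- Let L be a finitely generated free ℤ-module equipped with a bilinear form b : L × L → ℤ that is unimodular, meaning the induced map L → Hom_ℤ(L, ℤ), x ↦ b(x, −), is bijective. Let T ⊆ L be a submodule such that the quotient L/T is torsion-free. Then the restriction map L → Hom_ℤ(T, ℤ), x ↦ b(x, −)|_T, is surjective, and its kernel is the orthogonal complement T^⊥ = { x ∈ L : b(x, t) = 0 for all t ∈ T }. -/

import Mathlib

/-- Let `L` be a finitely generated free `ℤ`-module with a unimodular bilinear form `b`
(i.e. `x ↦ b x` is a bijection `L → Hom_ℤ(L, ℤ)`), and let `T ⊆ L` be a submodule with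
torsion-free quotient. Then `x ↦ (b x)|_T` is a surjection `L → Hom_ℤ(T, ℤ)` whose
kernel is the orthogonal complement of `T`. -/
theorem unimodular_restriction_surjective {L : Type*} [AddCommGroup L] [Module ℤ L]
    [Module.Free ℤ L] [Module.Finite ℤ L]
    (b : L →ₗ[ℤ] L →ₗ[ℤ] ℤ) (hb : Function.Bijective fun x : L => b x)
    (T : Submodule ℤ L) (hT : NoZeroSMulDivisors ℤ (L ⧸ T)) :
    (Function.Surjective fun x : L => (b x).domRestrict T) ∧
      (∀ x : L, (b x).domRestrict T = 0 ↔ ∀ t ∈ T, b x t = 0) := by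
  letI : Module ℤ (L ⧸ T) := Submodule.Quotient.module T
  letI : Module ℤ T := T.module
  constructor
  · intro f
    have hfin : Module.Finite ℤ (L ⧸ T) := Module.Finite.of_surjective T.mkQ T.mkQ_surjective
    haveI : Subsingleton (Module ℤ (L ⧸ T)) := (AddCommGroup.uniqueIntModule).instSubsingleton
    haveI hT' := @NoZeroSMulDivisors.mk ℤ (L ⧸ T) _ _ ((Submodule.Quotient.module T).toSMul)
      (fun {c x} h => hT.1 ((int_smul_eq_zsmul (Submodule.Quotient.module T) c x).symm.trans h))
    have hfree : Module.Free ℤ (L ⧸ T) := Module.free_of_finite_type_torsion_free'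
    have hproj : Module.Projective ℤ (L ⧸ T) := Module.Projective.of_free
    obtain ⟨s, hs⟩ := Module.projective_lifting_property T.mkQ (LinearMap.id : (L ⧸ T) →ₗ[ℤ] L ⧸ T) T.mkQ_surjective
    have hmem : ∀ x : L, x - s (T.mkQ x) ∈ T := by
      intro x
      have h := LinearMap.congr_fun hs (T.mkQ x)
      simp only [LinearMap.comp_apply, LinearMap.id_apply] at h
      rw [← Submodule.Quotient.mk_eq_zero]
      simpa [Submodule.Quotient.mk_sub, ← Submodule.mkQ_apply, sub_eq_zero] using h.symm
    let p : L →ₗ[ℤ] T := (LinearMap.id - s ∘ₗ T.mkQ).codRestrict T (by simpa using hmem)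
    obtain ⟨x, hx⟩ := hb.2 (f ∘ₗ p)
    refine ⟨x, ?_⟩
    ext t
    have ht : T.mkQ (t : L) = 0 := by
      simp [Submodule.Quotient.mk_eq_zero, t.2]
    have hpt : p (t : L) = t := by
      have : ((p (t : L) : L)) = t := by
        simp [p, LinearMap.codRestrict, ← Submodule.mkQ_apply, ht]
      exact Subtype.ext this
    simp only [LinearMap.domRestrict_apply]
    calc b x (t : L) = (f ∘ₗ p) (t : L) := by rw [show b x = f ∘ₗ p from hx]
      _ = f t := by rw [LinearMap.comp_apply, hpt]
  · intro x
    constructor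
    · intro h t ht
      have := LinearMap.congr_fun h ⟨t, ht⟩
      simpa using this
    · intro h
      ext t
      simpa using h t t.2
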